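/- With ρ and h as in the parametrization of the stability boundary curve, for 0 < q1 < q2 < q ≤ 2 the function ω ↦ h(ω, q2, q1, q) = ω^(-q2/q)·[ω·ρ(q-q1, q1-q2) - ρ(q1, q1-q2)] is strictly decreasing on (0, ∞). -/
import Mathlib


open Real

/-- `ρ(a,b) = sin(aπ/2)/sin(bπ/2)`. -/
noncomputable def rho (a b : ℝ) : ℝ := Real.sin (a * Real.pi / 2) / Real.sin (b * Real.pi / 2)

lemma sin_pos_of_mem (x : ℝ) (hx0 : 0 < x) (hx2 : x < 2) : 0 < Real.sin (x * Real.pi / 2) := by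
  apply Real.sin_pos_of_pos_of_lt_pi
  · positivity
  · have := Real.pi_pos
    nlinarith

theorem stmt_6 (q q1 q2 : ℝ) (h1 : 0 < q1) (h2 : q1 < q2) (h3 : q2 < q) (h4 : q ≤ 2) :
    StrictAntiOn
      (fun ω : ℝ => ω ^ (-(q2 / q)) * (ω * rho (q - q1) (q1 - q2) - rho q1 (q1 - q2)))
      (Set.Ioi 0) := by
  have hq : 0 < q := by linarith
  have hden : Real.sin ((q1 - q2) * Real.pi / 2) < 0 := by
    have : 0 < Real.sin ((q2 - q1) * Real.pi / 2) := sin_pos_of_mem _ (by linarith) (by linarith)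
    have h' : ((q1 - q2) * Real.pi / 2) = -((q2 - q1) * Real.pi / 2) := by ring
    rw [h', Real.sin_neg]; linarith
  have hA : rho (q - q1) (q1 - q2) < 0 := by
    have hn : 0 < Real.sin ((q - q1) * Real.pi / 2) := sin_pos_of_mem _ (by linarith) (by linarith)
    exact div_neg_of_pos_of_neg hn hden
  have hB : rho q1 (q1 - q2) < 0 := by
    have hn : 0 < Real.sin (q1 * Real.pi / 2) := sin_pos_of_mem _ h1 (by linarith)
    exact div_neg_of_pos_of_neg hn hden
  set A := rho (q - q1) (q1 - q2)
  set B := rho q1 (q1 - q2)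
  have he1 : (0:ℝ) < 1 - q2 / q := by
    have : q2 / q < 1 := (div_lt_one hq).mpr h3
    linarith
  have he2 : -(q2 / q) < 0 := by
    have : 0 < q2 / q := div_pos (by linarith) hq
    linarith
  intro a ha b hb hab
  simp only [Set.mem_Ioi] at ha hb
  have key : ∀ x : ℝ, 0 < x →
      x ^ (-(q2 / q)) * (x * A - B) = A * x ^ (1 - q2 / q) - B * x ^ (-(q2 / q)) := by
    intro x hx
    have : x * x ^ (-(q2 / q)) = x ^ (1 - q2 / q) := by
      rw [show (1 - q2 / q) = 1 + (-(q2/q)) by ring, Real.rpow_add hx, Real.rpow_one]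
    nlinarith [this]
  simp only [key a ha, key b hb]
  have t1 : A * b ^ (1 - q2 / q) < A * a ^ (1 - q2 / q) := by
    have := Real.rpow_lt_rpow (le_of_lt ha) hab he1
    exact mul_lt_mul_of_neg_left this hA
  have t2 : b ^ (-(q2 / q)) < a ^ (-(q2 / q)) := Real.rpow_lt_rpow_of_neg ha hab he2
  have t3 : -B * b ^ (-(q2 / q)) < -B * a ^ (-(q2 / q)) :=
    mul_lt_mul_of_pos_left t2 (by linarith)
  linarith
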